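/- Let A_M ∈ (0,1] and p ∈ (0,1], and suppose nonnegative random sequences γ_k (≈‖z^k−x*‖²) and ν_k (≈‖w^k−x*‖²) satisfy E_k[γ_{k+1}] ≤ (1 − 2A_M/3)γ_k + (A_M/6)ν_k and E_k[ν_{k+1}] = (1−p)ν_k + p γ_k. Then the Lyapunov function Φ_k := γ_k + (A_M/(3p))ν_k satisfies E_k[Φ_{k+1}] ≤ (1 − min{A_M/3, p/2}) Φ_k, and hence E[Φ_k] ≤ (1 − min{A_M/3, p/2})^k Φ_0. -/

import Mathlib

open MeasureTheory

/-- the FedNL-BC Lyapunov function `Φ_k = γ_k + (A_M/(3p)) ν_k`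
contracts at rate `1 − min{A_M/3, p/2}` in conditional expectation, hence in expectation. -/
theorem fednl_bc_lyapunov_contraction {Ω : Type*} {m0 : MeasurableSpace Ω}
    (μ : Measure Ω) [IsProbabilityMeasure μ] (ℱ : Filtration ℕ m0)
    (AM p : ℝ) (hAM0 : 0 < AM) (hAM1 : AM ≤ 1) (hp0 : 0 < p) (hp1 : p ≤ 1)
    (γ ν : ℕ → Ω → ℝ)
    (hγnn : ∀ k ω, 0 ≤ γ k ω) (hνnn : ∀ k ω, 0 ≤ ν k ω)
    (hγmeas : ∀ k, StronglyMeasurable[ℱ k] (γ k))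
    (hνmeas : ∀ k, StronglyMeasurable[ℱ k] (ν k))
    (hγint : ∀ k, Integrable (γ k) μ) (hνint : ∀ k, Integrable (ν k) μ)
    (hrecγ : ∀ k, μ[γ (k + 1)|ℱ k] ≤ᵐ[μ]
      fun ω => (1 - 2 * AM / 3) * γ k ω + AM / 6 * ν k ω)
    (hrecν : ∀ k, μ[ν (k + 1)|ℱ k] =ᵐ[μ] fun ω => (1 - p) * ν k ω + p * γ k ω) :
    (∀ k, μ[fun ω => γ (k + 1) ω + AM / (3 * p) * ν (k + 1) ω|ℱ k] ≤ᵐ[μ]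
        fun ω => (1 - min (AM / 3) (p / 2)) * (γ k ω + AM / (3 * p) * ν k ω)) ∧
      ∀ k, ∫ ω, (γ k ω + AM / (3 * p) * ν k ω) ∂μ ≤
        (1 - min (AM / 3) (p / 2)) ^ k * ∫ ω, (γ 0 ω + AM / (3 * p) * ν 0 ω) ∂μ := by
  set c : ℝ := AM / (3 * p) with hc
  set m : ℝ := min (AM / 3) (p / 2) with hm
  have hc0 : 0 ≤ c := by positivity
  have hcp : c * p = AM / 3 := by rw [hc]; field_simp
  have hmA : m ≤ AM / 3 := min_le_left _ _
  have hmp : m ≤ p / 2 := min_le_right _ _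
  have hm1 : 1 - m ≥ 0 := by
    have : m ≤ AM / 3 := hmA
    nlinarith
  have hΦint : ∀ k, Integrable (fun ω => γ k ω + c * ν k ω) μ := fun k =>
    (hγint k).add ((hνint k).const_mul c)
  have part1 : ∀ k, μ[fun ω => γ (k + 1) ω + c * ν (k + 1) ω|ℱ k] ≤ᵐ[μ]
      fun ω => (1 - m) * (γ k ω + c * ν k ω) := by
    intro k
    have hadd : μ[fun ω => γ (k + 1) ω + c * ν (k + 1) ω|ℱ k]
        =ᵐ[μ] μ[γ (k + 1)|ℱ k] + μ[fun ω => c * ν (k + 1) ω|ℱ k] :=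
      condExp_add (hγint (k + 1)) ((hνint (k + 1)).const_mul c) (ℱ k)
    have hsmul : μ[fun ω => c * ν (k + 1) ω|ℱ k] =ᵐ[μ]
        fun ω => c * (μ[ν (k + 1)|ℱ k]) ω := by
      exact condExp_smul (μ := μ) (m := ℱ k) c (ν (k + 1))
    filter_upwards [hadd, hsmul, hrecγ k, hrecν k] with ω h1 h2 h3 h4
    rw [h1]
    simp only [Pi.add_apply]
    rw [h2, h4]
    have hγk := hγnn k ω
    have hνk := hνnn k ω
    have key : (1 - 2 * AM / 3) * γ k ω + AM / 6 * ν k ω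
        + c * ((1 - p) * ν k ω + p * γ k ω)
        ≤ (1 - m) * (γ k ω + c * ν k ω) := by
      have e1 : c * ((1 - p) * ν k ω + p * γ k ω)
          = (c - AM / 3) * ν k ω + AM / 3 * γ k ω := by
        have : c * p = AM / 3 := hcp
        nlinarith [this]
      rw [e1]
      have h5 : m * c ≤ AM / 6 := by
        calc m * c ≤ (p / 2) * c := by nlinarith
          _ = AM / 6 := by nlinarith [hcp]
      nlinarith [mul_le_mul_of_nonneg_right hmA hγk,
        mul_le_mul_of_nonneg_right h5 hνk]
    calc (μ[γ (k+1)|ℱ k]) ω + c * ((1 - p) * ν k ω + p * γ k ω)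
        ≤ (1 - 2 * AM / 3) * γ k ω + AM / 6 * ν k ω
          + c * ((1 - p) * ν k ω + p * γ k ω) := by linarith [h3]
      _ ≤ _ := key
  refine ⟨part1, ?_⟩
  have step : ∀ k, ∫ ω, (γ (k + 1) ω + c * ν (k + 1) ω) ∂μ
      ≤ (1 - m) * ∫ ω, (γ k ω + c * ν k ω) ∂μ := by
    intro k
    have h1 : ∫ ω, (γ (k + 1) ω + c * ν (k + 1) ω) ∂μ
        = ∫ ω, (μ[fun ω => γ (k + 1) ω + c * ν (k + 1) ω|ℱ k]) ω ∂μ :=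
      (integral_condExp (ℱ.le k)).symm
    rw [h1]
    calc ∫ ω, (μ[fun ω => γ (k + 1) ω + c * ν (k + 1) ω|ℱ k]) ω ∂μ
        ≤ ∫ ω, (1 - m) * (γ k ω + c * ν k ω) ∂μ :=
          integral_mono_ae integrable_condExp ((hΦint k).const_mul _) (part1 k)
      _ = (1 - m) * ∫ ω, (γ k ω + c * ν k ω) ∂μ := integral_const_mul _ _
  intro k
  induction k with
  | zero => simp
  | succ n ih =>
      calc ∫ ω, (γ (n + 1) ω + c * ν (n + 1) ω) ∂μ
          ≤ (1 - m) * ∫ ω, (γ n ω + c * ν n ω) ∂μ := step n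
        _ ≤ (1 - m) * ((1 - m) ^ n * ∫ ω, (γ 0 ω + c * ν 0 ω) ∂μ) :=
            mul_le_mul_of_nonneg_left ih hm1
        _ = (1 - m) ^ (n + 1) * ∫ ω, (γ 0 ω + c * ν 0 ω) ∂μ := by ring
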